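/- Let φ : F → ℤ be the homomorphism sending each of a, b, c, d to 1 (the total exponent sum). Then the subgroup of F generated by the six elements ba⁻¹, ca⁻¹, da⁻¹, cb⁻¹, db⁻¹, dc⁻¹ equals ker φ; in particular this subgroup consists exactly of the elements of F with zero total exponent sum. -/

import Mathlib

/-- `F₂`, the free group on two generators. -/
abbrev F2 : Type := FreeGroup (Fin 2)

/-- `a`, a free generator of the first factor of `F₂ × F₂`. -/
def a : F2 × F2 := (FreeGroup.of 0, 1)
/-- `b`, a free generator of the first factor of `F₂ × F₂`. -/
def b : F2 × F2 := (FreeGroup.of 1, 1)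
/-- `c`, a free generator of the second factor of `F₂ × F₂`. -/
def c : F2 × F2 := (1, FreeGroup.of 0)
/-- `d`, a free generator of the second factor of `F₂ × F₂`. -/
def d : F2 × F2 := (1, FreeGroup.of 1)

private def Sgen : Set (F2 × F2) := {b * a⁻¹, c * a⁻¹, d * a⁻¹, c * b⁻¹, d * b⁻¹, d * c⁻¹}

private def H : Subgroup (F2 × F2) := Subgroup.closure Sgen

private lemma h1 : b * a⁻¹ ∈ H := Subgroup.subset_closure (by simp [Sgen])
private lemma h2 : c * a⁻¹ ∈ H := Subgroup.subset_closure (by simp [Sgen])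
private lemma h3 : d * a⁻¹ ∈ H := Subgroup.subset_closure (by simp [Sgen])
private lemma h6 : d * c⁻¹ ∈ H := Subgroup.subset_closure (by simp [Sgen])

section
attribute [local simp] Prod.ext_iff Prod.fst_mul Prod.snd_mul Prod.fst_inv Prod.snd_inv a b c d

private lemma prodeq {x y : F2 × F2} (h1 : x.1 = y.1) (h2 : x.2 = y.2) : x = y := Prod.ext h1 h2

/-- Conjugation by `a` preserves `H`. -/
private lemma conj_a : ∀ x ∈ H, a * x * a⁻¹ ∈ H := by
  intro x hx
  have : x ∈ H.comap ((MulAut.conj a).toMonoidHom : (F2 × F2) →* (F2 × F2)) := by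
    refine Subgroup.closure_le _ |>.mpr ?_ hx
    rintro s (rfl | rfl | rfl | rfl | rfl | rfl) <;>
      simp only [SetLike.mem_coe, Subgroup.mem_comap, MulEquiv.coe_toMonoidHom, MulAut.conj_apply]
    · have : a * (b * a⁻¹) * a⁻¹ = (c * a⁻¹)⁻¹ * (b * a⁻¹) * (c * a⁻¹) := by
        refine prodeq ?_ ?_ <;> simp <;> group
      rw [this]; exact H.mul_mem (H.mul_mem (H.inv_mem h2) h1) h2
    · have : a * (c * a⁻¹) * a⁻¹ = c * a⁻¹ := by
        refine prodeq ?_ ?_ <;> simp <;> group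
      rw [this]; exact h2
    · have : a * (d * a⁻¹) * a⁻¹ = d * a⁻¹ := by
        refine prodeq ?_ ?_ <;> simp <;> group
      rw [this]; exact h3
    · have : a * (c * b⁻¹) * a⁻¹ = (b * a⁻¹)⁻¹ * (c * a⁻¹) := by
        refine prodeq ?_ ?_ <;> simp <;> group
      rw [this]; exact H.mul_mem (H.inv_mem h1) h2
    · have : a * (d * b⁻¹) * a⁻¹ = (d * a⁻¹) * ((c * a⁻¹)⁻¹ * (b * a⁻¹) * (c * a⁻¹))⁻¹ := by
        refine prodeq ?_ ?_ <;> simp <;> group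
      rw [this]
      exact H.mul_mem h3 (H.inv_mem (H.mul_mem (H.mul_mem (H.inv_mem h2) h1) h2))
    · have : a * (d * c⁻¹) * a⁻¹ = d * c⁻¹ := by
        refine prodeq ?_ ?_ <;> simp <;> group
      rw [this]; exact h6
  simpa using this

/-- Conjugation by `a⁻¹` preserves `H`. -/
private lemma conj_a_inv : ∀ x ∈ H, a⁻¹ * x * a ∈ H := by
  intro x hx
  have : x ∈ H.comap ((MulAut.conj a⁻¹).toMonoidHom : (F2 × F2) →* (F2 × F2)) := by
    refine Subgroup.closure_le _ |>.mpr ?_ hx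
    rintro s (rfl | rfl | rfl | rfl | rfl | rfl) <;>
      simp only [SetLike.mem_coe, Subgroup.mem_comap, MulEquiv.coe_toMonoidHom, MulAut.conj_apply, inv_inv]
    · have : a⁻¹ * (b * a⁻¹) * a = (c * a⁻¹) * (b * a⁻¹) * (c * a⁻¹)⁻¹ := by
        refine prodeq ?_ ?_ <;> simp <;> group
      rw [this]; exact H.mul_mem (H.mul_mem h2 h1) (H.inv_mem h2)
    · have : a⁻¹ * (c * a⁻¹) * a = c * a⁻¹ := by
        refine prodeq ?_ ?_ <;> simp <;> group
      rw [this]; exact h2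
    · have : a⁻¹ * (d * a⁻¹) * a = d * a⁻¹ := by
        refine prodeq ?_ ?_ <;> simp <;> group
      rw [this]; exact h3
    · have : a⁻¹ * (c * b⁻¹) * a = (c * a⁻¹) * ((c * a⁻¹) * (b * a⁻¹) * (c * a⁻¹)⁻¹)⁻¹ := by
        refine prodeq ?_ ?_ <;> simp <;> group
      rw [this]
      exact H.mul_mem h2 (H.inv_mem (H.mul_mem (H.mul_mem h2 h1) (H.inv_mem h2)))
    · have : a⁻¹ * (d * b⁻¹) * a = (d * a⁻¹) * ((c * a⁻¹) * (b * a⁻¹) * (c * a⁻¹)⁻¹)⁻¹ := by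
        refine prodeq ?_ ?_ <;> simp <;> group
      rw [this]
      exact H.mul_mem h3 (H.inv_mem (H.mul_mem (H.mul_mem h2 h1) (H.inv_mem h2)))
    · have : a⁻¹ * (d * c⁻¹) * a = d * c⁻¹ := by
        refine prodeq ?_ ?_ <;> simp <;> group
      rw [this]; exact h6
  simpa using this

end

private lemma a_mem_normalizer : a ∈ Subgroup.normalizer (H : Set (F2 × F2)) := by
  rw [Subgroup.mem_normalizer_iff]
  intro n
  constructor
  · exact conj_a n
  · intro hn
    have := conj_a_inv _ hn
    have e : a⁻¹ * (a * n * a⁻¹) * a = n := by group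
    rwa [e] at this

private lemma myConjZpow : ∀ (m : ℤ) (x : F2 × F2), x ∈ H → a ^ m * x * a ^ (-m) ∈ H := by
  intro m x hx
  have hm : a ^ m ∈ Subgroup.normalizer (H : Set (F2 × F2)) := Subgroup.zpow_mem _ a_mem_normalizer m
  have := (Subgroup.mem_normalizer_iff.mp hm x).mp hx
  rwa [← zpow_neg] at this

/-- The subgroup of elements `x` with `x * a ^ (-(φ x).toAdd) ∈ H`. -/
private def T (φ : F2 × F2 →* Multiplicative ℤ) : Subgroup (F2 × F2) where
  carrier := {x | x * a ^ (-(Multiplicative.toAdd (φ x))) ∈ H}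
  one_mem' := by simp [H.one_mem]
  mul_mem' := by
    intro x y hx hy
    simp only [Set.mem_setOf_eq, map_mul, toAdd_mul] at *
    set m := Multiplicative.toAdd (φ x)
    set n := Multiplicative.toAdd (φ y)
    have e : x * y * a ^ (-(m + n)) =
        (x * a ^ (-m)) * (a ^ m * (y * a ^ (-n)) * a ^ (-m)) := by
      group
    rw [e]
    exact H.mul_mem hx (myConjZpow m _ hy)
  inv_mem' := by
    intro x hx
    simp only [Set.mem_setOf_eq, map_inv, toAdd_inv, neg_neg] at *
    set m := Multiplicative.toAdd (φ x)
    have e : x⁻¹ * a ^ m = (a ^ (-m) * (x * a ^ (-m)) * a ^ (-(-m)))⁻¹ := by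
      group
    rw [e]
    exact H.inv_mem (myConjZpow (-m) _ hx)

private lemma mem_T (φ : F2 × F2 →* Multiplicative ℤ)
    (ha : φ a = Multiplicative.ofAdd 1) (hb : φ b = Multiplicative.ofAdd 1)
    (hc : φ c = Multiplicative.ofAdd 1) (hd : φ d = Multiplicative.ofAdd 1)
    (x : F2 × F2) : x ∈ T φ := by
  have hTa : a ∈ T φ := by
    show a * a ^ (-(Multiplicative.toAdd (φ a))) ∈ H
    rw [ha]
    norm_num
  have hTb : b ∈ T φ := by
    show b * a ^ (-(Multiplicative.toAdd (φ b))) ∈ H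
    rw [hb]
    simpa using h1
  have hTc : c ∈ T φ := by
    show c * a ^ (-(Multiplicative.toAdd (φ c))) ∈ H
    rw [hc]
    simpa using h2
  have hTd : d ∈ T φ := by
    show d * a ^ (-(Multiplicative.toAdd (φ d))) ∈ H
    rw [hd]
    simpa using h3
  have hx : x = (x.1, (1 : F2)) * ((1 : F2), x.2) := by
    simp [Prod.ext_iff]
  rw [hx]
  refine (T φ).mul_mem ?_ ?_
  · induction x.1 using FreeGroup.induction_on with
    | C1 => exact (T φ).one_mem
    | of i =>
      fin_cases i
      · exact hTa
      · exact hTb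
    | inv_of i h =>
      have e : (((FreeGroup.of i : F2))⁻¹, (1 : F2)) = (((FreeGroup.of i : F2), (1 : F2)))⁻¹ := by
        simp [Prod.ext_iff]
      rw [e]
      exact (T φ).inv_mem h
    | mul u v hu hv =>
      have e : (u * v, (1 : F2)) = (u, (1 : F2)) * (v, (1 : F2)) := by
        simp [Prod.ext_iff]
      rw [e]
      exact (T φ).mul_mem hu hv
  · induction x.2 using FreeGroup.induction_on with
    | C1 => exact (T φ).one_mem
    | of i =>
      fin_cases i
      · exact hTc
      · exact hTd
    | inv_of i h =>
      have e : ((1 : F2), ((FreeGroup.of i : F2))⁻¹) = (((1 : F2), (FreeGroup.of i : F2)))⁻¹ := by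
        simp [Prod.ext_iff]
      rw [e]
      exact (T φ).inv_mem h
    | mul u v hu hv =>
      have e : ((1 : F2), u * v) = ((1 : F2), u) * ((1 : F2), v) := by
        simp [Prod.ext_iff]
      rw [e]
      exact (T φ).mul_mem hu hv

/-- If `φ : F(a,b) × F(c,d) → ℤ` is the homomorphism sending each of `a, b, c, d` to `1`
(the total exponent sum), then the subgroup generated by the six elements
`ba⁻¹, ca⁻¹, da⁻¹, cb⁻¹, db⁻¹, dc⁻¹` equals `ker φ`. -/
theorem stmt_1 (φ : F2 × F2 →* Multiplicative ℤ)
    (ha : φ a = Multiplicative.ofAdd 1) (hb : φ b = Multiplicative.ofAdd 1)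
    (hc : φ c = Multiplicative.ofAdd 1) (hd : φ d = Multiplicative.ofAdd 1) :
    Subgroup.closure
      ({b * a⁻¹, c * a⁻¹, d * a⁻¹, c * b⁻¹, d * b⁻¹, d * c⁻¹} : Set (F2 × F2)) = φ.ker := by
  have hHdef : Subgroup.closure
      ({b * a⁻¹, c * a⁻¹, d * a⁻¹, c * b⁻¹, d * b⁻¹, d * c⁻¹} : Set (F2 × F2)) = H := rfl
  rw [hHdef]
  apply le_antisymm
  · rw [H, Sgen, Subgroup.closure_le]
    rintro s (rfl | rfl | rfl | rfl | rfl | rfl) <;>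
      simp [MonoidHom.mem_ker, ha, hb, hc, hd]
  · intro x hx
    have hm := mem_T φ ha hb hc hd x
    have hk : φ x = 1 := hx
    have : x * a ^ (-(Multiplicative.toAdd (φ x))) ∈ H := hm
    rw [hk] at this
    simpa using this
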